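/- arXiv:1508.06912 — 2 statements merged into one kernel-verified Lean document; each statement's English description precedes it below -/
import Mathlib

section
/- Let U_{n,m,γ}(x) = ∑_{k=0}^∞ p_{n,k,γ}(x)·(k/n − x)^m. Then for all m ≥ 1 and x ≥ 0, the recurrence n·U_{n,m+1,γ}(x) = x(1+γx)·(U'_{n,m,γ}(x) + m·U_{n,m−1,γ}(x)) holds, where the derivative is with respect to x. -/
open MeasureTheory Filter Real Topology

noncomputable def p (n γ : ℝ) (k : ℕ) (x : ℝ) : ℝ :=
  Real.Gamma (n / γ + (k : ℝ)) / (Real.Gamma ((k : ℝ) + 1) * Real.Gamma (n / γ)) *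
    (γ * x) ^ k / (1 + γ * x) ^ (n / γ + (k : ℝ))

noncomputable def U (n : ℝ) (m : ℕ) (γ x : ℝ) : ℝ :=
  ∑' k : ℕ, p n γ k x * ((k : ℝ) / n - x) ^ m

/-! ### Auxiliary lemmas -/

noncomputable def Ck (a : ℝ) (k : ℕ) : ℝ :=
  Real.Gamma (a + k) / (Real.Gamma ((k : ℝ) + 1) * Real.Gamma a)

lemma Ck_pos {a : ℝ} (ha : 0 < a) (k : ℕ) : 0 < Ck a k := by
  have h1 : (0:ℝ) < a + k := by positivity
  have h2 : (0:ℝ) < (k:ℝ) + 1 := by positivity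
  exact div_pos (Real.Gamma_pos_of_pos h1)
    (mul_pos (Real.Gamma_pos_of_pos h2) (Real.Gamma_pos_of_pos ha))

lemma Ck_succ {a : ℝ} (ha : 0 < a) (k : ℕ) :
    Ck a (k + 1) = (a + k) / ((k : ℝ) + 1) * Ck a k := by
  unfold Ck
  push_cast
  rw [show a + ((k:ℝ) + 1) = (a + k) + 1 by ring,
    Real.Gamma_add_one (by positivity),
    show (k:ℝ) + 1 + 1 = ((k:ℝ) + 1) + 1 by ring,
    Real.Gamma_add_one (by positivity)]
  have hΓ1 : Real.Gamma ((k:ℝ) + 1) ≠ 0 := (Real.Gamma_pos_of_pos (by positivity)).ne'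
  have hΓ2 : Real.Gamma a ≠ 0 := (Real.Gamma_pos_of_pos ha).ne'
  have hk1 : ((k:ℝ) + 1) ≠ 0 := by positivity
  field_simp

lemma summable_master {a T : ℝ} (ha : 0 < a) (hT0 : 0 < T) (hT1 : T < 1) (j : ℕ) :
    Summable (fun k : ℕ => Ck a k * ((k : ℝ) + 1) ^ j * T ^ k) := by
  apply summable_of_ratio_test_tendsto_lt_one hT1
  · refine Eventually.of_forall fun k => ?_
    have := Ck_pos ha k
    positivity
  · have hratio : (fun k : ℕ => ‖Ck a (k+1) * (((k+1:ℕ) : ℝ) + 1) ^ j * T ^ (k+1)‖ /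
        ‖Ck a k * ((k : ℝ) + 1) ^ j * T ^ k‖) =
        fun k : ℕ => ((a + k) / ((k:ℝ) + 1)) * (((k:ℝ) + 2) / ((k:ℝ) + 1)) ^ j * T := by
      funext k
      have hC := Ck_pos ha k
      have hC1 := Ck_pos ha (k+1)
      have h1 : (0:ℝ) < ((k:ℝ) + 1) := by positivity
      rw [Real.norm_eq_abs, Real.norm_eq_abs, abs_of_pos (by positivity), abs_of_pos (by positivity),
        Ck_succ ha k]
      push_cast
      rw [div_pow]
      field_simp
      ring
    rw [hratio]
    have t1 : Tendsto (fun k : ℕ => 1 / ((k:ℝ) + 1)) atTop (𝓝 0) :=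
      tendsto_one_div_add_atTop_nhds_zero_nat
    have t2 : Tendsto (fun k : ℕ => (a + k) / ((k:ℝ) + 1)) atTop (𝓝 1) := by
      have he : (fun k : ℕ => (a + k) / ((k:ℝ) + 1)) =
          fun k : ℕ => (a - 1) * (1 / ((k:ℝ) + 1)) + 1 := by
        funext k
        have h1 : ((k:ℝ) + 1) ≠ 0 := by positivity
        field_simp
        ring
      rw [he]
      simpa using (t1.const_mul (a - 1)).add_const 1
    have t3 : Tendsto (fun k : ℕ => (((k:ℝ) + 2) / ((k:ℝ) + 1)) ^ j) atTop (𝓝 1) := by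
      have he : (fun k : ℕ => ((k:ℝ) + 2) / ((k:ℝ) + 1)) =
          fun k : ℕ => 1 / ((k:ℝ) + 1) + 1 := by
        funext k
        have h1 : ((k:ℝ) + 1) ≠ 0 := by positivity
        field_simp
        ring
      have h := (t1.add_const 1).pow j
      simp only [zero_add, one_pow] at h
      refine h.congr fun k => ?_
      rw [show (1/((k:ℝ)+1)+1) = ((k:ℝ)+2)/((k:ℝ)+1) by
        have h1 : ((k:ℝ) + 1) ≠ 0 := by positivity
        field_simp
        ring]
    simpa using (t2.mul t3).mul_const T

lemma p_eq (n γ : ℝ) (k : ℕ) (x : ℝ) :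
    p n γ k x = Ck (n/γ) k * (γ * x) ^ k / (1 + γ * x) ^ (n / γ + (k : ℝ)) := rfl

lemma p_nonneg {n γ : ℝ} (hγ : 0 < γ) (hn : 0 < n) (k : ℕ) {y : ℝ} (hy : 0 ≤ y) :
    0 ≤ p n γ k y := by
  have ha : 0 < n / γ := by positivity
  have hz : (0:ℝ) < 1 + γ * y := by positivity
  have hC := Ck_pos ha k
  have hr := Real.rpow_pos_of_pos hz (n / γ + (k : ℝ))
  rw [p_eq]
  positivity

lemma p_le {n γ : ℝ} (hγ : 0 < γ) (hn : 0 < n) (k : ℕ) {y b : ℝ} (hy : 0 ≤ y) (hyb : y ≤ b) :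
    p n γ k y ≤ Ck (n/γ) k * (γ * b / (1 + γ * b)) ^ k := by
  have ha : 0 < n / γ := by positivity
  have hz : (0:ℝ) < 1 + γ * y := by positivity
  have hb : (0:ℝ) ≤ b := hy.trans hyb
  have hzb : (0:ℝ) < 1 + γ * b := by nlinarith [mul_nonneg hγ.le hb]
  have hC := Ck_pos ha k
  have hsplit : (1 + γ * y) ^ (n / γ + (k : ℝ)) =
      (1 + γ * y) ^ (n / γ) * (1 + γ * y) ^ k := by
    rw [Real.rpow_add hz, Real.rpow_natCast]
  have hB : (1 + γ * y) ^ (n / γ) ≠ 0 := (Real.rpow_pos_of_pos hz _).ne'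
  have hkz : ((1 + γ * y) : ℝ) ^ k ≠ 0 := by positivity
  have h1 : p n γ k y = Ck (n/γ) k * (γ * y / (1 + γ * y)) ^ k / (1 + γ * y) ^ (n / γ) := by
    rw [p_eq, hsplit, div_pow]
    field_simp
  rw [h1]
  have hone : (1:ℝ) ≤ (1 + γ * y) ^ (n / γ) := by
    apply Real.one_le_rpow (by nlinarith [mul_nonneg hγ.le hy]) (by positivity)
  have hmono : γ * y / (1 + γ * y) ≤ γ * b / (1 + γ * b) := by
    rw [div_le_div_iff₀ hz hzb]
    nlinarith [mul_nonneg hγ.le hy]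
  calc Ck (n/γ) k * (γ * y / (1 + γ * y)) ^ k / (1 + γ * y) ^ (n / γ)
      ≤ Ck (n/γ) k * (γ * y / (1 + γ * y)) ^ k := by
        apply div_le_self (by positivity) hone
    _ ≤ Ck (n/γ) k * (γ * b / (1 + γ * b)) ^ k := by
        have := pow_le_pow_left₀ (by positivity) hmono k
        exact mul_le_mul_of_nonneg_left this hC.le

lemma hasDerivAt_p {n γ : ℝ} (hγ : 0 < γ) (hn : 0 < n) (k : ℕ) {y : ℝ} (hy : 0 < y) :
    HasDerivAt (fun z => p n γ k z)
      (((k : ℝ) - n * y) * p n γ k y / (y * (1 + γ * y))) y := by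
  have hz : (0:ℝ) < 1 + γ * y := by positivity
  have hg : HasDerivAt (fun z : ℝ => (γ * z) ^ k) ((k:ℝ) * (γ * y) ^ (k - 1) * γ) y := by
    have h : HasDerivAt (fun z : ℝ => γ * z) γ y := by
      simpa using (hasDerivAt_id y).const_mul γ
    exact h.pow k
  have hh : HasDerivAt (fun z : ℝ => (1 + γ * z) ^ (n / γ + (k:ℝ)))
      ((n / γ + (k:ℝ)) * (1 + γ * y) ^ (n / γ + (k:ℝ) - 1) * γ) y := by
    have h1 : HasDerivAt (fun z : ℝ => 1 + γ * z) γ y := by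
      simpa using ((hasDerivAt_id y).const_mul γ).const_add 1
    have h2 := Real.hasDerivAt_rpow_const (x := 1 + γ * y) (p := n / γ + (k:ℝ)) (Or.inl hz.ne')
    exact h2.comp y h1
  have hne : (1 + γ * y) ^ (n / γ + (k:ℝ)) ≠ 0 := (Real.rpow_pos_of_pos hz _).ne'
  have H := (hg.const_mul (Ck (n/γ) k)).div hh hne
  have hfun : (fun z => p n γ k z) =
      (fun z => Ck (n/γ) k * (γ * z) ^ k / (1 + γ * z) ^ (n / γ + (k:ℝ))) := by
    funext z; rw [p_eq]
  rw [hfun]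
  refine H.congr_deriv ?_
  symm
  have hsub : (1 + γ * y) ^ (n / γ + (k:ℝ) - 1) =
      (1 + γ * y) ^ (n / γ + (k:ℝ)) / (1 + γ * y) := by
    rw [Real.rpow_sub hz, Real.rpow_one]
  rw [p_eq, hsub]
  have hgn : γ ≠ 0 := hγ.ne'
  cases k with
  | zero =>
    simp only [Nat.cast_zero, pow_zero]
    field_simp
    ring
  | succ j =>
    have hpow : (γ * y) ^ (j + 1) = (γ * y) ^ j * (γ * y) := pow_succ _ _
    simp only [Nat.add_sub_cancel, hpow]
    push_cast
    field_simp
    ring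


lemma abs_center_le {n : ℝ} (hn : 0 < n) (k : ℕ) {x y : ℝ} (hx : 0 < x)
    (hy2 : y ≤ 2 * x) (hy0 : 0 ≤ y) :
    |(k:ℝ)/n - y| ≤ ((k:ℝ) + 1) * (1/n + 2*x) := by
  have h1n : (0:ℝ) < 1/n := by positivity
  have hk : (0:ℝ) ≤ (k:ℝ) := Nat.cast_nonneg k
  rw [show (k:ℝ)/n = (k:ℝ) * (1/n) by ring, abs_le]
  constructor
  · nlinarith [mul_nonneg hk h1n.le, mul_nonneg hk hx.le]
  · nlinarith [mul_nonneg hk h1n.le, mul_nonneg hk hx.le]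

noncomputable def gterm (n γ : ℝ) (m k : ℕ) (y : ℝ) : ℝ :=
  p n γ k y * ((k:ℝ)/n - y) ^ m

noncomputable def gterm' (n γ : ℝ) (m k : ℕ) (y : ℝ) : ℝ :=
  ((k:ℝ) - n * y) * p n γ k y / (y * (1 + γ * y)) * ((k:ℝ)/n - y) ^ m
    - (m:ℝ) * p n γ k y * ((k:ℝ)/n - y) ^ (m - 1)

lemma hasDerivAt_gterm {n γ : ℝ} (hγ : 0 < γ) (hn : 0 < n) (m k : ℕ) {y : ℝ} (hy : 0 < y) :
    HasDerivAt (fun z => gterm n γ m k z) (gterm' n γ m k y) y := by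
  have h1 := hasDerivAt_p hγ hn k hy
  have h2 : HasDerivAt (fun z : ℝ => ((k:ℝ)/n - z) ^ m)
      ((m:ℝ) * ((k:ℝ)/n - y) ^ (m - 1) * (-1)) y := by
    have h : HasDerivAt (fun z : ℝ => (k:ℝ)/n - z) (-1) y := by
      simpa using (hasDerivAt_id y).const_sub ((k:ℝ)/n)
    exact h.pow m
  have H := h1.mul h2
  refine H.congr_deriv ?_
  symm
  unfold gterm'
  ring

lemma abs_gterm_le {n γ : ℝ} (hγ : 0 < γ) (hn : 0 < n) (m k : ℕ) {x y : ℝ} (hx : 0 < x)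
    (hy2 : y ≤ 2 * x) (hy0 : 0 ≤ y) :
    |gterm n γ m k y| ≤
      Ck (n/γ) k * ((k:ℝ) + 1) ^ m * (γ * (2*x) / (1 + γ * (2*x))) ^ k * (1/n + 2*x) ^ m := by
  have ha : 0 < n / γ := by positivity
  have hc := Ck_pos ha k
  have hp0 := p_nonneg hγ hn k hy0
  have hpT := p_le hγ hn k hy0 hy2
  have habs := abs_center_le hn k hx hy2 hy0
  have hT0 : (0:ℝ) ≤ γ * (2*x) / (1 + γ * (2*x)) := by positivity
  have hD0 : (0:ℝ) < 1/n + 2*x := by positivity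
  unfold gterm
  rw [abs_mul, abs_pow, abs_of_nonneg hp0]
  calc p n γ k y * |(k:ℝ)/n - y| ^ m
      ≤ (Ck (n/γ) k * (γ * (2*x) / (1 + γ * (2*x))) ^ k) * (((k:ℝ) + 1) * (1/n + 2*x)) ^ m := by
        apply mul_le_mul hpT (pow_le_pow_left₀ (abs_nonneg _) habs m)
          (pow_nonneg (abs_nonneg _) m) (by positivity)
    _ = Ck (n/γ) k * ((k:ℝ) + 1) ^ m * (γ * (2*x) / (1 + γ * (2*x))) ^ k * (1/n + 2*x) ^ m := by
        rw [mul_pow]; ring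

theorem baskakov_central_moment_recurrence (n γ : ℝ) (m : ℕ)
    (hγ : 0 < γ) (hn : 0 < n) (hm : 1 ≤ m) :
    ∀ x : ℝ, 0 ≤ x →
      n * U n (m + 1) γ x =
        x * (1 + γ * x) * (deriv (fun y => U n m γ y) x + m * U n (m - 1) γ x) := by
  intro x hx
  rcases eq_or_lt_of_le hx with hx0 | hx0
  · -- x = 0
    have hzero : ∀ k : ℕ, p n γ k 0 * ((k:ℝ)/n - 0) ^ (m+1) = 0 := by
      intro k
      cases k with
      | zero => simp
      | succ j => simp [p]
    have hU0 : U n (m+1) γ 0 = 0 := by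
      unfold U
      rw [tsum_congr hzero, tsum_zero]
    rw [← hx0]
    simp [hU0]
  · -- x > 0
    have ha : 0 < n / γ := by positivity
    have hzx : (0:ℝ) < 1 + γ * (2*x) := by nlinarith
    have hT0 : (0:ℝ) < γ * (2*x) / (1 + γ * (2*x)) := by positivity
    have hT1 : γ * (2*x) / (1 + γ * (2*x)) < 1 := by
      rw [div_lt_one hzx]; linarith
    have hD0 : (0:ℝ) < 1/n + 2*x := by positivity
    -- the summable bound for the derivatives
    have hu : Summable (fun k : ℕ => (2*n*(1/n + 2*x)^(m+1)/x + m*(1/n + 2*x)^(m-1)) *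
        (Ck (n/γ) k * ((k:ℝ) + 1) ^ (m+1) * (γ * (2*x) / (1 + γ * (2*x))) ^ k)) :=
      (summable_master ha hT0 hT1 (m+1)).mul_left _
    -- the bound on the derivative of each term
    have hbound : ∀ (k : ℕ), ∀ y ∈ Set.Ioo (x/2) (2*x), ‖gterm' n γ m k y‖ ≤
        (2*n*(1/n + 2*x)^(m+1)/x + m*(1/n + 2*x)^(m-1)) *
        (Ck (n/γ) k * ((k:ℝ) + 1) ^ (m+1) * (γ * (2*x) / (1 + γ * (2*x))) ^ k) := by
      intro k y hys
      obtain ⟨hy1, hy2⟩ := hys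
      have hy : 0 < y := lt_trans (by linarith) hy1
      have hc := Ck_pos ha k
      have hp0 := p_nonneg hγ hn k hy.le
      have hpT := p_le hγ hn k hy.le hy2.le
      have habs := abs_center_le hn k hx0 hy2.le hy.le
      have hden : (0:ℝ) < y * (1 + γ * y) := by nlinarith [mul_nonneg hγ.le hy.le]
      have hdenx : x/2 ≤ y * (1 + γ * y) := by
        nlinarith [mul_nonneg (mul_nonneg hγ.le hy.le) hy.le]
      have hk1 : |(k:ℝ) - n * y| ≤ n * (((k:ℝ) + 1) * (1/n + 2*x)) := by
        rw [show (k:ℝ) - n*y = n * ((k:ℝ)/n - y) by field_simp, abs_mul, abs_of_pos hn]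
        exact mul_le_mul_of_nonneg_left habs hn.le
      have hTk0 : (0:ℝ) ≤ Ck (n/γ) k * (γ * (2*x) / (1 + γ * (2*x))) ^ k :=
        mul_nonneg hc.le (pow_nonneg hT0.le k)
      have hA : |((k:ℝ) - n * y) * p n γ k y / (y * (1 + γ * y)) * ((k:ℝ)/n - y) ^ m| ≤
          n * (((k:ℝ) + 1) * (1/n + 2*x)) *
            (Ck (n/γ) k * (γ * (2*x) / (1 + γ * (2*x))) ^ k) *
            (((k:ℝ) + 1) * (1/n + 2*x)) ^ m / (x/2) := by
        rw [abs_mul, abs_div, abs_mul, abs_pow, abs_of_nonneg hp0, abs_of_pos hden,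
          div_mul_eq_mul_div]
        apply div_le_div₀ (by positivity) _ (by linarith) hdenx
        exact mul_le_mul (mul_le_mul hk1 hpT hp0 (by positivity))
          (pow_le_pow_left₀ (abs_nonneg _) habs m) (pow_nonneg (abs_nonneg _) m) (by positivity)
      have hB : |(m:ℝ) * p n γ k y * ((k:ℝ)/n - y) ^ (m-1)| ≤
          (m:ℝ) * (Ck (n/γ) k * (γ * (2*x) / (1 + γ * (2*x))) ^ k) *
            (((k:ℝ) + 1) * (1/n + 2*x)) ^ (m-1) := by
        rw [abs_mul, abs_mul, abs_pow, abs_of_nonneg hp0,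
          abs_of_nonneg (Nat.cast_nonneg m : (0:ℝ) ≤ (m:ℝ))]
        exact mul_le_mul (mul_le_mul_of_nonneg_left hpT (Nat.cast_nonneg m))
          (pow_le_pow_left₀ (abs_nonneg _) habs (m-1)) (pow_nonneg (abs_nonneg _) _)
          (mul_nonneg (Nat.cast_nonneg m) hTk0)
      have e1 : n * (((k:ℝ) + 1) * (1/n + 2*x)) *
            (Ck (n/γ) k * (γ * (2*x) / (1 + γ * (2*x))) ^ k) *
            (((k:ℝ) + 1) * (1/n + 2*x)) ^ m / (x/2)
          = 2*n*(1/n + 2*x)^(m+1)/x *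
            (Ck (n/γ) k * ((k:ℝ) + 1) ^ (m+1) * (γ * (2*x) / (1 + γ * (2*x))) ^ k) := by
        rw [mul_pow]
        ring
      have hpow_le : ((k:ℝ) + 1) ^ (m-1) ≤ ((k:ℝ) + 1) ^ (m+1) := by
        apply pow_le_pow_right₀ _ (by omega)
        have := Nat.cast_nonneg (α := ℝ) k
        linarith
      have e2 : (m:ℝ) * (Ck (n/γ) k * (γ * (2*x) / (1 + γ * (2*x))) ^ k) *
            (((k:ℝ) + 1) * (1/n + 2*x)) ^ (m-1)
          ≤ (m:ℝ) * (1/n + 2*x)^(m-1) *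
            (Ck (n/γ) k * ((k:ℝ) + 1) ^ (m+1) * (γ * (2*x) / (1 + γ * (2*x))) ^ k) := by
        rw [mul_pow]
        calc (m:ℝ) * (Ck (n/γ) k * (γ * (2*x) / (1 + γ * (2*x))) ^ k) *
              (((k:ℝ) + 1) ^ (m-1) * (1/n + 2*x) ^ (m-1))
            ≤ (m:ℝ) * (Ck (n/γ) k * (γ * (2*x) / (1 + γ * (2*x))) ^ k) *
              (((k:ℝ) + 1) ^ (m+1) * (1/n + 2*x) ^ (m-1)) := by
              exact mul_le_mul_of_nonneg_left
                (mul_le_mul_of_nonneg_right hpow_le (pow_nonneg hD0.le _))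
                (mul_nonneg (Nat.cast_nonneg m) hTk0)
          _ = (m:ℝ) * (1/n + 2*x)^(m-1) *
              (Ck (n/γ) k * ((k:ℝ) + 1) ^ (m+1) * (γ * (2*x) / (1 + γ * (2*x))) ^ k) := by
              ring
      calc ‖gterm' n γ m k y‖
          ≤ |((k:ℝ) - n * y) * p n γ k y / (y * (1 + γ * y)) * ((k:ℝ)/n - y) ^ m| +
            |(m:ℝ) * p n γ k y * ((k:ℝ)/n - y) ^ (m-1)| := by
            rw [Real.norm_eq_abs]; exact abs_sub _ _
        _ ≤ n * (((k:ℝ) + 1) * (1/n + 2*x)) *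
              (Ck (n/γ) k * (γ * (2*x) / (1 + γ * (2*x))) ^ k) *
              (((k:ℝ) + 1) * (1/n + 2*x)) ^ m / (x/2) +
            (m:ℝ) * (Ck (n/γ) k * (γ * (2*x) / (1 + γ * (2*x))) ^ k) *
              (((k:ℝ) + 1) * (1/n + 2*x)) ^ (m-1) := add_le_add hA hB
        _ ≤ 2*n*(1/n + 2*x)^(m+1)/x *
              (Ck (n/γ) k * ((k:ℝ) + 1) ^ (m+1) * (γ * (2*x) / (1 + γ * (2*x))) ^ k) +
            (m:ℝ) * (1/n + 2*x)^(m-1) *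
              (Ck (n/γ) k * ((k:ℝ) + 1) ^ (m+1) * (γ * (2*x) / (1 + γ * (2*x))) ^ k) :=
            add_le_add e1.le e2
        _ = (2*n*(1/n + 2*x)^(m+1)/x + m*(1/n + 2*x)^(m-1)) *
            (Ck (n/γ) k * ((k:ℝ) + 1) ^ (m+1) * (γ * (2*x) / (1 + γ * (2*x))) ^ k) := by
            ring
    -- derivatives of the terms
    have hderiv_term : ∀ (k : ℕ), ∀ y ∈ Set.Ioo (x/2) (2*x),
        HasDerivAt (fun z => gterm n γ m k z) (gterm' n γ m k y) y := by
      intro k y hys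
      exact hasDerivAt_gterm hγ hn m k (lt_trans (by linarith) hys.1)
    have hxs : x ∈ Set.Ioo (x/2) (2*x) := ⟨by linarith, by linarith⟩
    have hg0 : Summable (fun k : ℕ => gterm n γ m k x) := by
      apply Summable.of_norm_bounded ((summable_master ha hT0 hT1 m).mul_right ((1/n + 2*x)^m))
      intro k
      rw [Real.norm_eq_abs]
      exact abs_gterm_le hγ hn m k hx0 (by linarith) hx0.le
    have H : HasDerivAt (fun z => ∑' k : ℕ, gterm n γ m k z) (∑' k : ℕ, gterm' n γ m k x) x :=
      hasDerivAt_tsum_of_isPreconnected hu isOpen_Ioo isPreconnected_Ioo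
        hderiv_term hbound hxs hg0 hxs
    have hd : deriv (fun y => U n m γ y) x = ∑' k : ℕ, gterm' n γ m k x := by
      have hfun : (fun y => U n m γ y) = (fun z => ∑' k : ℕ, gterm n γ m k z) := rfl
      rw [hfun]
      exact H.deriv
    have S1 : Summable (fun k : ℕ => gterm' n γ m k x) :=
      Summable.of_norm_bounded hu (fun k => hbound k x hxs)
    have S2 : Summable (fun k : ℕ => p n γ k x * ((k:ℝ)/n - x) ^ (m-1)) := by
      apply Summable.of_norm_bounded
        ((summable_master ha hT0 hT1 (m-1)).mul_right ((1/n + 2*x)^(m-1)))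
      intro k
      rw [Real.norm_eq_abs]
      exact abs_gterm_le hγ hn (m-1) k hx0 (by linarith) hx0.le
    rw [hd]
    unfold U
    have key : x * (1 + γ * x) * ((∑' k : ℕ, gterm' n γ m k x) +
        (m:ℝ) * ∑' k : ℕ, p n γ k x * ((k:ℝ)/n - x) ^ (m-1))
        = ∑' k : ℕ, (x * (1 + γ * x) * gterm' n γ m k x +
            (x * (1 + γ * x) * (m:ℝ)) * (p n γ k x * ((k:ℝ)/n - x) ^ (m-1))) := by
      rw [Summable.tsum_add (S1.mul_left _) (S2.mul_left _), tsum_mul_left, tsum_mul_left]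
      ring
    rw [key, ← tsum_mul_left]
    apply tsum_congr
    intro k
    have hq : (k:ℝ) - n * x = n * ((k:ℝ)/n - x) := by field_simp
    unfold gterm'
    rw [hq]
    have hxne : x ≠ 0 := hx0.ne'
    have hzne : (1 + γ * x) ≠ 0 := by nlinarith [mul_nonneg hγ.le hx0.le]
    have hnne : n ≠ 0 := hn.ne'
    generalize (k:ℝ)/n - x = w
    field_simp
    ring
end

section
/- For r ≥ 1 and n > γr, there exist polynomials Q_{i,j,r,γ}(x), independent of n and k, such that (x(1+γx))^r · D^r[p_{n,k,γ}(x)] = ∑_{2i+j ≤ r, i,j ≥ 0} n^i·(k − nx)^j·Q_{i,j,r,γ}(x)·p_{n,k,γ}(x), where D = d/dx. -/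
open MeasureTheory Filter Real

lemma p_smooth (n γ : ℝ) (k : ℕ) :
    ContDiffOn ℝ ⊤ (p n γ k) {y : ℝ | 0 < 1 + γ * y} := by
  intro x hx
  apply ContDiffAt.contDiffWithinAt
  have hb : (1 : ℝ) + γ * x ≠ 0 := ne_of_gt hx
  have h1 : ContDiffAt ℝ ⊤ (fun y : ℝ => Real.Gamma (n / γ + (k : ℝ)) /
      (Real.Gamma ((k : ℝ) + 1) * Real.Gamma (n / γ)) * (γ * y) ^ k) x := by
    exact (contDiffAt_const.mul ((contDiffAt_const.mul contDiffAt_id).pow k))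
  have h2 : ContDiffAt ℝ ⊤ (fun y : ℝ => (1 + γ * y) ^ (n / γ + (k : ℝ))) x :=
    (contDiffAt_const.add (contDiffAt_const.mul contDiffAt_id)).rpow_const_of_ne hb
  exact h1.div h2 (ne_of_gt (Real.rpow_pos_of_pos hx _))

lemma U_open (γ : ℝ) : IsOpen {y : ℝ | 0 < 1 + γ * y} :=
  isOpen_lt continuous_const (by continuity)

lemma iter_smooth (n γ : ℝ) (k : ℕ) (r : ℕ) :
    ContDiffOn ℝ ⊤ (iteratedDeriv r (p n γ k)) {y : ℝ | 0 < 1 + γ * y} := by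
  induction r with
  | zero => simpa [iteratedDeriv_zero] using p_smooth n γ k
  | succ r ih =>
    rw [iteratedDeriv_succ]
    exact ih.deriv_of_isOpen (U_open γ) (by simp)

lemma iter_hasDerivAt (n γ : ℝ) (k : ℕ) (r : ℕ) {x : ℝ} (hx : 0 < 1 + γ * x) :
    HasDerivAt (iteratedDeriv r (p n γ k)) (iteratedDeriv (r + 1) (p n γ k) x) x := by
  have h := ((iter_smooth n γ k r).differentiableOn (by simp)).differentiableAt
    ((U_open γ).mem_nhds hx)
  rw [iteratedDeriv_succ]
  exact h.hasDerivAt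

lemma p_hasDerivAt (n γ : ℝ) (k : ℕ) {x : ℝ} (hx : 0 < 1 + γ * x) :
    HasDerivAt (p n γ k)
      ((Real.Gamma (n / γ + (k : ℝ)) / (Real.Gamma ((k : ℝ) + 1) * Real.Gamma (n / γ)) *
          ((k : ℝ) * (γ * x) ^ (k - 1) * γ) * (1 + γ * x) ^ (n / γ + (k : ℝ)) -
        Real.Gamma (n / γ + (k : ℝ)) / (Real.Gamma ((k : ℝ) + 1) * Real.Gamma (n / γ)) *
          (γ * x) ^ k * (γ * (n / γ + (k : ℝ)) * (1 + γ * x) ^ (n / γ + (k : ℝ) - 1))) /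
        ((1 + γ * x) ^ (n / γ + (k : ℝ))) ^ 2) x := by
  have hb : (1 : ℝ) + γ * x ≠ 0 := ne_of_gt hx
  have h1 : HasDerivAt (fun y : ℝ => Real.Gamma (n / γ + (k : ℝ)) /
      (Real.Gamma ((k : ℝ) + 1) * Real.Gamma (n / γ)) * (γ * y) ^ k)
      (Real.Gamma (n / γ + (k : ℝ)) / (Real.Gamma ((k : ℝ) + 1) * Real.Gamma (n / γ)) *
        ((k : ℝ) * (γ * x) ^ (k - 1) * γ)) x := by
    simpa using (((hasDerivAt_id x).const_mul γ).pow k).const_mul (Real.Gamma (n / γ + (k : ℝ)) / (Real.Gamma ((k : ℝ) + 1) * Real.Gamma (n / γ)))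
  have h2 : HasDerivAt (fun y : ℝ => (1 + γ * y) ^ (n / γ + (k : ℝ)))
      (γ * (n / γ + (k : ℝ)) * (1 + γ * x) ^ (n / γ + (k : ℝ) - 1)) x := by
    have := HasDerivAt.rpow_const (p := n / γ + (k : ℝ)) (((hasDerivAt_id x).const_mul γ).const_add 1) (Or.inl hb)
    simpa [mul_assoc] using this
  exact h1.div h2 (ne_of_gt (Real.rpow_pos_of_pos hx _))

lemma alg_helper (x γ n kR C A A1 B B1 a : ℝ) (hA : A ≠ 0)
    (e1 : A1 * (1 + γ * x) = A) (e2 : kR * B1 * (γ * x) = kR * B)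
    (h3 : γ * a = n + kR * γ) :
    x * (1 + γ * x) * ((C * (kR * B1 * γ) * A - C * B * (γ * a * A1)) / A ^ 2)
      = (kR - n * x) * (C * B / A) := by
  rw [← mul_div_assoc, ← mul_div_assoc, div_eq_div_iff (pow_ne_zero 2 hA) hA]
  linear_combination (C * (1 + γ * x) * A ^ 2) * e2 - (C * B * γ * a * x * A) * e1
    - (C * B * x * A ^ 2) * h3

lemma p_deriv_id (n γ : ℝ) (hγ : 0 < γ) (k : ℕ) {x : ℝ} (hx : 0 < 1 + γ * x) :
    x * (1 + γ * x) * deriv (p n γ k) x = ((k : ℝ) - n * x) * p n γ k x := by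
  have hb : (1 : ℝ) + γ * x ≠ 0 := ne_of_gt hx
  have hA : (0:ℝ) < (1 + γ * x) ^ (n / γ + (k : ℝ)) := Real.rpow_pos_of_pos hx _
  rw [(p_hasDerivAt n γ k hx).deriv]
  have e1 : (1 + γ * x) ^ (n / γ + (k : ℝ) - 1) * (1 + γ * x)
      = (1 + γ * x) ^ (n / γ + (k : ℝ)) := by
    rw [Real.rpow_sub hx, Real.rpow_one, div_mul_cancel₀ _ hb]
  have e2 : (k : ℝ) * (γ * x) ^ (k - 1) * (γ * x) = (k : ℝ) * (γ * x) ^ k := by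
    cases k with
    | zero => simp
    | succ m => rw [pow_succ]; push_cast; ring
  have h3 : γ * (n / γ + (k : ℝ)) = n + (k : ℝ) * γ := by
    rw [mul_add, mul_comm γ (n / γ), div_mul_cancel₀ n (ne_of_gt hγ)]; ring
  have := alg_helper x γ n (k : ℝ)
    (Real.Gamma (n / γ + (k : ℝ)) / (Real.Gamma ((k : ℝ) + 1) * Real.Gamma (n / γ)))
    ((1 + γ * x) ^ (n / γ + (k : ℝ))) ((1 + γ * x) ^ (n / γ + (k : ℝ) - 1))
    ((γ * x) ^ k) ((γ * x) ^ (k - 1)) (n / γ + (k : ℝ)) (ne_of_gt hA) e1 e2 h3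
  rw [this]
  rfl

lemma shift_j (N : ℕ) (f : ℕ → ℕ → ℝ) (hf : ∀ i, f i (N + 1) = 0) :
    ∑ ij ∈ Finset.range (N+1) ×ˢ Finset.range (N+1), f ij.1 (ij.2 + 1)
      = ∑ ij ∈ Finset.range (N+1) ×ˢ Finset.range (N+1),
          (if ij.2 = 0 then 0 else f ij.1 ij.2) := by
  rw [Finset.sum_product, Finset.sum_product]
  refine Finset.sum_congr rfl fun i _ => ?_
  rw [Finset.sum_range_succ (fun j => f i (j + 1)), hf i, add_zero,
    Finset.sum_range_succ' (fun j => if j = 0 then (0:ℝ) else f i j)]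
  simp

lemma shift_ij (N : ℕ) (f : ℕ → ℕ → ℝ) (h1 : ∀ j, f (N + 1) j = 0)
    (h2 : ∀ i, f i N = 0) :
    ∑ ij ∈ Finset.range (N+1) ×ˢ Finset.range (N+1),
        (if ij.2 = 0 then (0:ℝ) else f (ij.1 + 1) (ij.2 - 1))
      = ∑ ij ∈ Finset.range (N+1) ×ˢ Finset.range (N+1),
          (if ij.1 = 0 then 0 else f ij.1 ij.2) := by
  rw [Finset.sum_product, Finset.sum_product]
  have inner : ∀ i, (∑ j ∈ Finset.range (N+1),
      if j = 0 then (0:ℝ) else f (i+1) (j-1)) = ∑ j ∈ Finset.range (N+1), f (i+1) j := by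
    intro i
    rw [Finset.sum_range_succ' (fun j => if j = 0 then (0:ℝ) else f (i+1) (j-1)),
      Finset.sum_range_succ (fun j => f (i+1) j), h2]
    simp
  rw [Finset.sum_congr rfl (fun i _ => inner i)]
  rw [Finset.sum_range_succ (fun i => ∑ j ∈ Finset.range (N+1), f (i+1) j)]
  have hz : ∑ j ∈ Finset.range (N+1), f (N+1) j = 0 := by simp [h1]
  rw [hz, add_zero]
  rw [show (∑ x ∈ Finset.range (N+1), ∑ y ∈ Finset.range (N+1),
      if (x, y).1 = 0 then (0:ℝ) else f (x, y).1 (x, y).2)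
      = ∑ x ∈ Finset.range (N+1), (if x = 0 then (0:ℝ) else ∑ y ∈ Finset.range (N+1), f x y) from
    Finset.sum_congr rfl fun x _ => by split_ifs with h <;> simp [h]]
  rw [Finset.sum_range_succ' (fun i => if i = 0 then (0:ℝ) else ∑ j ∈ Finset.range (N+1), f i j)]
  simp

lemma key (γ : ℝ) (hγ : 0 < γ) (r : ℕ) :
    ∃ Q : ℕ → ℕ → Polynomial ℝ, (∀ i j, r < 2 * i + j → Q i j = 0) ∧
      ∀ (n : ℝ) (k : ℕ) (x : ℝ), 0 < 1 + γ * x →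
        (x * (1 + γ * x)) ^ r * iteratedDeriv r (p n γ k) x =
          ∑ ij ∈ Finset.range (r + 1) ×ˢ Finset.range (r + 1),
            n ^ ij.1 * ((k : ℝ) - n * x) ^ ij.2 * (Q ij.1 ij.2).eval x * p n γ k x := by
  induction r with
  | zero =>
    refine ⟨fun i j => if i = 0 ∧ j = 0 then 1 else 0, fun i j h => by
      beta_reduce; rw [if_neg (by omega)], fun n k x hx => ?_⟩
    simp [Finset.sum_product]
  | succ r IH =>
    obtain ⟨Q, hQ0, hQ⟩ := IH
    set P : Polynomial ℝ := Polynomial.X * (1 + Polynomial.C γ * Polynomial.X) with hP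
    set L : Polynomial ℝ := 1 + Polynomial.C (2 * γ) * Polynomial.X with hL
    refine ⟨fun i j => P * (Q i j).derivative
      + (if i = 0 then 0 else Polynomial.C (-((j : ℝ) + 1)) * (P * Q (i - 1) (j + 1)))
      + (if j = 0 then 0 else Q i (j - 1))
      - Polynomial.C (r : ℝ) * (L * Q i j), fun i j h => ?_, fun n k x hx => ?_⟩
    · have z1 : Q i j = 0 := hQ0 i j (by omega)
      have z2 : Q i (j - 1) = 0 := by
        rcases Nat.eq_zero_or_pos j with hj | hj
        · subst hj; exact hQ0 i 0 (by omega)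
        · exact hQ0 i (j - 1) (by omega)
      have z3 : Q (i - 1) (j + 1) = 0 := by
        rcases Nat.eq_zero_or_pos i with hi | hi
        · exact hQ0 (i - 1) (j + 1) (by subst hi; simp; omega)
        · exact hQ0 (i - 1) (j + 1) (by omega)
      beta_reduce
      split_ifs <;> simp [z1, z2, z3]
    · have hp0 : HasDerivAt (p n γ k) (deriv (p n γ k) x) x :=
        (p_hasDerivAt n γ k hx).differentiableAt.hasDerivAt
      have hpd := p_deriv_id n γ hγ k hx
      set D : ℕ × ℕ → ℝ := fun ij =>
        (n ^ ij.1 * ((ij.2 : ℝ) * ((k : ℝ) - n * x) ^ (ij.2 - 1) * -n) * (Q ij.1 ij.2).eval x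
          + n ^ ij.1 * ((k : ℝ) - n * x) ^ ij.2 * ((Q ij.1 ij.2).derivative.eval x)) * p n γ k x
        + n ^ ij.1 * ((k : ℝ) - n * x) ^ ij.2 * (Q ij.1 ij.2).eval x * deriv (p n γ k) x
        with hD
      have hterm : ∀ ij ∈ Finset.range (r + 1) ×ˢ Finset.range (r + 1),
          HasDerivAt (fun y => n ^ ij.1 * ((k : ℝ) - n * y) ^ ij.2 * (Q ij.1 ij.2).eval y
            * p n γ k y) (D ij) x := by
        rintro ⟨i, j⟩ -
        have h1 : HasDerivAt (fun y : ℝ => (k : ℝ) - n * y) (-n) x := by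
          simpa using ((hasDerivAt_id x).const_mul n).const_sub ((k : ℝ))
        have h3 := (((h1.pow j).const_mul (n ^ i)).mul (Polynomial.hasDerivAt (Q i j) x)).mul hp0
        refine h3.congr_deriv ?_
        simp only [hD, Pi.pow_apply, Pi.mul_apply]
      have hG := HasDerivAt.sum hterm
      have hmul : HasDerivAt (fun y : ℝ => y * (1 + γ * y)) (1 + 2 * γ * x) x := by
        have := (hasDerivAt_id x).mul (((hasDerivAt_id x).const_mul γ).const_add 1)
        refine this.congr_deriv ?_
        simp; ring
      have hFd := (hmul.pow r).mul (iter_hasDerivAt n γ k r hx)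
      simp only [Pi.pow_apply] at hFd
      have heq : (fun y => (y * (1 + γ * y)) ^ r * iteratedDeriv r (p n γ k) y) =ᶠ[nhds x]
          (fun y => ∑ ij ∈ Finset.range (r + 1) ×ˢ Finset.range (r + 1),
            n ^ ij.1 * ((k : ℝ) - n * y) ^ ij.2 * (Q ij.1 ij.2).eval y * p n γ k y) := by
        filter_upwards [(U_open γ).mem_nhds hx] with y hy using hQ n k y hy
      have hEq : (↑r * (x * (1 + γ * x)) ^ (r - 1) * (1 + 2 * γ * x))
            * iteratedDeriv r (p n γ k) x
          + (x * (1 + γ * x)) ^ r * iteratedDeriv (r + 1) (p n γ k) x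
          = ∑ ij ∈ Finset.range (r + 1) ×ˢ Finset.range (r + 1), D ij := by
        rw [← hFd.deriv, ← hG.deriv, Finset.sum_fn]
        exact heq.deriv_eq
      have haux : (r : ℝ) * ((x * (1 + γ * x)) * (x * (1 + γ * x)) ^ (r - 1))
          = (r : ℝ) * (x * (1 + γ * x)) ^ r := by
        cases r with
        | zero => simp
        | succ m => rw [Nat.add_sub_cancel, ← pow_succ']
      have hstep : (x * (1 + γ * x)) ^ (r + 1) * iteratedDeriv (r + 1) (p n γ k) x
          = ∑ ij ∈ Finset.range (r + 1) ×ˢ Finset.range (r + 1),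
              ((x * (1 + γ * x)) * D ij - (r : ℝ) * (1 + 2 * γ * x)
                * (n ^ ij.1 * ((k : ℝ) - n * x) ^ ij.2 * (Q ij.1 ij.2).eval x * p n γ k x)) := by
        rw [Finset.sum_sub_distrib, ← Finset.mul_sum, ← Finset.mul_sum, ← hQ n k x hx]
        linear_combination (x * (1 + γ * x)) * hEq
          - (1 + 2 * γ * x) * iteratedDeriv r (p n γ k) x * haux
      have hsub : Finset.range (r + 1) ×ˢ Finset.range (r + 1)
          ⊆ Finset.range (r + 2) ×ˢ Finset.range (r + 2) :=
        Finset.product_subset_product (Finset.range_subset_range.2 (by omega))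
          (Finset.range_subset_range.2 (by omega))
      have hext : ∑ ij ∈ Finset.range (r + 1) ×ˢ Finset.range (r + 1),
            ((x * (1 + γ * x)) * D ij - (r : ℝ) * (1 + 2 * γ * x)
              * (n ^ ij.1 * ((k : ℝ) - n * x) ^ ij.2 * (Q ij.1 ij.2).eval x * p n γ k x))
          = ∑ ij ∈ Finset.range (r + 2) ×ˢ Finset.range (r + 2),
            ((x * (1 + γ * x)) * D ij - (r : ℝ) * (1 + 2 * γ * x)
              * (n ^ ij.1 * ((k : ℝ) - n * x) ^ ij.2 * (Q ij.1 ij.2).eval x * p n γ k x)) := by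
        refine Finset.sum_subset hsub fun ij h1 h2 => ?_
        have hz : Q ij.1 ij.2 = 0 := by
          refine hQ0 _ _ ?_
          simp only [Finset.mem_product, Finset.mem_range] at h1 h2
          omega
        simp [hD, hz]
      set g : ℕ → ℕ → ℝ := fun i j => n ^ i * ((k : ℝ) - n * x) ^ j * (-((j : ℝ) + 1))
        * (x * (1 + γ * x)) * (Q (i - 1) (j + 1)).eval x * p n γ k x with hg
      set h2f : ℕ → ℕ → ℝ := fun i j => n ^ i * ((k : ℝ) - n * x) ^ j
        * (Q i (j - 1)).eval x * p n γ k x with hh2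
      have hsplit : ∀ ij ∈ Finset.range (r + 2) ×ˢ Finset.range (r + 2),
          ((x * (1 + γ * x)) * D ij - (r : ℝ) * (1 + 2 * γ * x)
            * (n ^ ij.1 * ((k : ℝ) - n * x) ^ ij.2 * (Q ij.1 ij.2).eval x * p n γ k x))
          = (if ij.2 = 0 then (0:ℝ) else g (ij.1 + 1) (ij.2 - 1))
            + (n ^ ij.1 * ((k : ℝ) - n * x) ^ ij.2
                * ((x * (1 + γ * x)) * ((Q ij.1 ij.2).derivative.eval x)) * p n γ k x
              + h2f ij.1 (ij.2 + 1)
              + (-(r : ℝ)) * (1 + 2 * γ * x)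
                * (n ^ ij.1 * ((k : ℝ) - n * x) ^ ij.2 * (Q ij.1 ij.2).eval x * p n γ k x)) := by
        rintro ⟨i, j⟩ -
        simp only [hD, hg, hh2, Nat.add_sub_cancel]
        cases j with
        | zero =>
          rw [if_pos rfl]
          simp only [Nat.cast_zero, Nat.zero_sub, pow_zero]
          linear_combination (n ^ i * (Q i 0).eval x) * hpd
        | succ m =>
          rw [if_neg (Nat.succ_ne_zero m), Nat.add_sub_cancel]
          push_cast
          linear_combination (n ^ i * ((k : ℝ) - n * x) ^ (m + 1) * (Q i (m + 1)).eval x) * hpd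
      rw [hstep, hext, Finset.sum_congr rfl hsplit, Finset.sum_add_distrib,
        shift_ij (r + 1) g (fun j => by simp [hg, hQ0 (r + 1) (j + 1) (by omega)])
          (fun i => by simp [hg, hQ0 (i - 1) (r + 2) (by omega)]),
        Finset.sum_add_distrib, Finset.sum_add_distrib,
        shift_j (r + 1) h2f (fun i => by simp [hh2, hQ0 i (r + 1) (by omega)]),
        ← Finset.sum_add_distrib, ← Finset.sum_add_distrib, ← Finset.sum_add_distrib]
      refine Finset.sum_congr rfl ?_
      rintro ⟨i, j⟩ -
      simp only [hg, hh2, hP, hL, Polynomial.eval_add, Polynomial.eval_sub, Polynomial.eval_mul,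
        Polynomial.eval_C, Polynomial.eval_X, Polynomial.eval_one, Polynomial.eval_zero,
        apply_ite (Polynomial.eval x)]
      split_ifs <;> push_cast <;> ring

theorem baskakov_deriv_polynomial_decomposition (γ : ℝ) (r : ℕ) (hγ : 0 < γ) (hr : 1 ≤ r) :
    ∃ Q : ℕ → ℕ → Polynomial ℝ,
      ∀ (n : ℝ), γ * r < n → ∀ (k : ℕ) (x : ℝ), 0 ≤ x →
        (x * (1 + γ * x)) ^ r * iteratedDeriv r (fun y => p n γ k y) x =
          ∑ ij ∈ (Finset.range (r + 1) ×ˢ Finset.range (r + 1)).filter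
              (fun ij => 2 * ij.1 + ij.2 ≤ r),
            n ^ ij.1 * ((k : ℝ) - n * x) ^ ij.2 * (Q ij.1 ij.2).eval x * p n γ k x := by


  obtain ⟨Q, hQ0, hQ⟩ := key γ hγ r
  refine ⟨Q, fun n hn k x hx => ?_⟩
  have h1 : 0 < 1 + γ * x := by nlinarith [mul_nonneg hγ.le hx]
  have h2 : iteratedDeriv r (fun y => p n γ k y) x = iteratedDeriv r (p n γ k) x := rfl
  rw [h2, hQ n k x h1]
  refine (Finset.sum_subset (Finset.filter_subset _ _) fun ij hmem hnot => ?_).symm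
  have hz : Q ij.1 ij.2 = 0 := by
    refine hQ0 _ _ ?_
    simp only [Finset.mem_filter, hmem, true_and, not_le] at hnot
    omega
  simp [hz]
end
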